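/- For g(p) = n₊(A₁⁽¹⁾)(p) with p ≥ 5 prime, the 2-cochains e^{1,4} and e^{2,5} are 2-cocycles: d²(e^{1,4}) = 0 and d²(e^{2,5}) = 0. -/
import Mathlib


noncomputable section

/-- The structure constants: `aZ i j` is 1, 0, or -1 according as
`j - i` is congruent to 1, 0, or -1 modulo 3. -/
def aZ (i j : ℕ) : ℤ :=
  if ((j : ℤ) - (i : ℤ)) % 3 = 1 then 1
  else if ((j : ℤ) - (i : ℤ)) % 3 = 0 then 0
  else -1

variable (F : Type*) [Field F] (p : ℕ)

/-- The structure constants viewed in the field `F`. -/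
def aF (i j : ℕ) : F := ((aZ i j : ℤ) : F)

/-- The basis vector `e_k` (for `1 ≤ k ≤ p`) of the truncated algebra
`g(p) = n₊(A₁⁽¹⁾)(p)`, modelled on `Fin p → F`; `E k = 0` for `k` out of range. -/
def E (k : ℕ) : Fin p → F :=
  if h : 1 ≤ k ∧ k ≤ p then Pi.single (⟨k - 1, by omega⟩ : Fin p) 1 else 0

/-- The `k`-th coordinate (coefficient of `e_k`) of an element of `g(p)`. -/
def coord (k : ℕ) (g : Fin p → F) : F :=
  if h : 1 ≤ k ∧ k ≤ p then g ⟨k - 1, by omega⟩ else 0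

/-- The Lie bracket of `g(p)`: `[e_i, e_j] = a_{i,j} e_{i+j}`, interpreted as `0`
when `i + j > p`. -/
def br (f g : Fin p → F) : Fin p → F :=
  ∑ i : Fin p, ∑ j : Fin p,
    (f i * g j * aF F (i.1 + 1) (j.1 + 1)) • E F p (i.1 + 1 + (j.1 + 1))

/-- `s(k)`: `k/2 - 1` if `k` is even, `(k-1)/2` if `k` is odd. -/
def sdeg (k : ℕ) : ℕ := if k % 2 = 0 then k / 2 - 1 else (k - 1) / 2

/-- `M(p,k) = 1` if `k ≤ p + 1`, and `k - p` otherwise. -/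
def Mlow (p k : ℕ) : ℕ := if k ≤ p + 1 then 1 else k - p

/-- The 2-cochain `e^{i,j}`, the dual of `e_i ∧ e_j`, as a bilinear form. -/
def wedge (i j : ℕ) (g h : Fin p → F) : F :=
  coord F p i g * coord F p j h - coord F p j g * coord F p i h

/-- The 2-cochain `φ_k = Σ_{i = M(p,k)}^{s(k)} a_{i,k-i} e^{i,k-i}`. -/
def phiC (k : ℕ) (g h : Fin p → F) : F :=
  ∑ i ∈ Finset.Icc (Mlow p k) (sdeg k), aF F i (k - i) * wedge F p i (k - i) g h

/-- The Chevalley–Eilenberg differential `d²` with trivial coefficients. -/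
def d2 (φ : (Fin p → F) → (Fin p → F) → F) (g h f : Fin p → F) : F :=
  φ (br F p g h) f - φ (br F p g f) h + φ (br F p h f) g

/-- The space `C² = (Λ² g(p))*`, modelled as the span of the `e^{i,j}`. -/
def C2span : Submodule F ((Fin p → F) → (Fin p → F) → F) :=
  Submodule.span F {w | ∃ i j : ℕ, 1 ≤ i ∧ i < j ∧ j ≤ p ∧ w = wedge F p i j}

lemma coord_zero (g : Fin p → F) : coord F p 0 g = 0 := by
  simp [coord]

lemma coord_val (g : Fin p → F) (i : Fin p) : coord F p (i.1 + 1) g = g i := by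
  rw [coord, dif_pos ⟨by omega, by omega⟩]
  congr 1
  all_goals (apply Fin.ext; simp only [Fin.val_mk])

lemma E_apply (m : ℕ) (hm : 1 ≤ m) (x : Fin p) :
    E F p m x = if m = x.1 + 1 then 1 else 0 := by
  unfold E
  by_cases h : m ≤ p
  · rw [dif_pos ⟨hm, h⟩, Pi.single_apply]
    congr 1
    rw [Fin.ext_iff, Fin.val_mk]
    simp only [eq_iff_iff]
    omega
  · rw [dif_neg (by omega), if_neg (by omega)]
    rfl

lemma coord_br (k : ℕ) (hk1 : 1 ≤ k) (hkp : k ≤ p) (g h : Fin p → F) :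
    coord F p k (br F p g h) =
      ∑ m ∈ Finset.Icc 1 k, coord F p m g * coord F p (k - m) h * aF F m (k - m) := by
  have hp1 : 1 ≤ p := le_trans hk1 hkp
  rw [coord, dif_pos ⟨hk1, hkp⟩, br]
  simp only [Finset.sum_apply, Pi.smul_apply, smul_eq_mul]
  have hE : ∀ (i j : Fin p),
      E F p (i.1 + 1 + (j.1 + 1)) (⟨k - 1, by omega⟩ : Fin p) =
        if i.1 + j.1 + 2 = k then 1 else 0 := by
    intro i j
    rw [E_apply F p _ (by omega)]
    simp only [Fin.val_mk]
    congr 1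
    simp only [eq_iff_iff]
    omega
  have step1 : ∀ i : Fin p, (∑ j : Fin p,
      g i * h j * aF F (i.1 + 1) (j.1 + 1) *
        E F p (i.1 + 1 + (j.1 + 1)) (⟨k - 1, by omega⟩ : Fin p)) =
      (if i.1 + 2 ≤ k then
        coord F p (i.1 + 1) g * coord F p (k - (i.1 + 1)) h *
          aF F (i.1 + 1) (k - (i.1 + 1)) else 0) := by
    intro i
    split_ifs with hik
    · rw [Finset.sum_eq_single (⟨k - i.1 - 2, by omega⟩ : Fin p)]
      · rw [hE, if_pos (by simp only [Fin.val_mk]; omega), mul_one]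
        have h1 := coord_val F p g i
        have h2 : coord F p (k - (i.1 + 1)) h = h ⟨k - i.1 - 2, by omega⟩ := by
          rw [coord, dif_pos ⟨by omega, by omega⟩]
          congr 1
          all_goals (apply Fin.ext; simp only [Fin.val_mk]; omega)
        have h3 : ((⟨k - i.1 - 2, by omega⟩ : Fin p) : ℕ) + 1 = k - (i.1 + 1) := by
          simp only [Fin.val_mk]; omega
        rw [h3, h1, h2]
      · intro b _ hb
        rw [hE, if_neg, mul_zero]
        intro hc
        apply hb
        rw [Fin.ext_iff, Fin.val_mk]
        simp only [Fin.val_mk] at hc ⊢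
        omega
      · intro hni
        exact absurd (Finset.mem_univ _) hni
    · apply Finset.sum_eq_zero
      intro b _
      rw [hE, if_neg (by omega), mul_zero]
  calc (∑ i : Fin p, ∑ j : Fin p,
        g i * h j * aF F (i.1 + 1) (j.1 + 1) *
          E F p (i.1 + 1 + (j.1 + 1)) (⟨k - 1, by omega⟩ : Fin p))
      = ∑ i : Fin p, (if i.1 + 2 ≤ k then
          coord F p (i.1 + 1) g * coord F p (k - (i.1 + 1)) h *
            aF F (i.1 + 1) (k - (i.1 + 1)) else 0) :=
        Finset.sum_congr rfl (fun i _ => step1 i)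
    _ = ∑ a ∈ Finset.range p, (if a + 2 ≤ k then
          coord F p (a + 1) g * coord F p (k - (a + 1)) h *
            aF F (a + 1) (k - (a + 1)) else 0) := by
        rw [← Fin.sum_univ_eq_sum_range]
    _ = ∑ a ∈ Finset.range (k - 1),
          coord F p (a + 1) g * coord F p (k - (a + 1)) h *
            aF F (a + 1) (k - (a + 1)) := by
        rw [← Finset.sum_subset (Finset.range_subset_range.2 (by omega : k - 1 ≤ p))]
        · exact Finset.sum_congr rfl fun a ha =>
            if_pos (by simp only [Finset.mem_range] at ha; omega)
        · intro a _ ha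
          rw [if_neg (by simp only [Finset.mem_range] at ha; omega)]
    _ = ∑ m ∈ Finset.Icc 1 (k - 1),
          coord F p m g * coord F p (k - m) h * aF F m (k - m) := by
        refine Finset.sum_nbij' (fun a => a + 1) (fun m => m - 1) ?_ ?_ ?_ ?_ ?_
        · intro a ha; simp only [Finset.mem_range] at ha; simp only [Finset.mem_Icc]; omega
        · intro m hm; simp only [Finset.mem_Icc] at hm; simp only [Finset.mem_range]; omega
        · intro a _; show a + 1 - 1 = a; omega
        · intro m hm; simp only [Finset.mem_Icc] at hm; show m - 1 + 1 = m; omega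
        · intro a _; rfl
    _ = ∑ m ∈ Finset.Icc 1 k, coord F p m g * coord F p (k - m) h * aF F m (k - m) := by
        have hkk : k = (k - 1) + 1 := by omega
        rw [hkk, Finset.sum_Icc_succ_top (by omega), ← hkk]
        rw [Nat.sub_self, coord_zero, mul_zero, zero_mul, add_zero]

lemma aF_eval (i j : ℕ) (v : ℤ) (hv : aZ i j = v) : aF F i j = (v : F) := by
  rw [aF, hv]

lemma coord_br_one (hp : 5 ≤ p) (g h : Fin p → F) : coord F p 1 (br F p g h) = 0 := by
  rw [coord_br F p 1 (by omega) (by omega)]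
  simp [coord_zero]

lemma coord_br_two (hp : 5 ≤ p) (g h : Fin p → F) : coord F p 2 (br F p g h) = 0 := by
  rw [coord_br F p 2 (by omega) (by omega)]
  rw [show (Finset.Icc 1 2 : Finset ℕ) = {1, 2} by decide,
      Finset.sum_insert (by decide), Finset.sum_singleton]
  norm_num [coord_zero, aF_eval F 1 1 0 (by decide)]

lemma coord_br_four (hp : 5 ≤ p) (g h : Fin p → F) :
    coord F p 4 (br F p g h) =
      - coord F p 1 g * coord F p 3 h + coord F p 3 g * coord F p 1 h := by
  rw [coord_br F p 4 (by omega) (by omega)]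
  rw [show (Finset.Icc 1 4 : Finset ℕ) = {1, 2, 3, 4} by decide,
      Finset.sum_insert (by decide), Finset.sum_insert (by decide),
      Finset.sum_insert (by decide), Finset.sum_singleton]
  norm_num [coord_zero, aF_eval F 1 3 (-1) (by decide), aF_eval F 2 2 0 (by decide),
    aF_eval F 3 1 1 (by decide)]

lemma coord_br_five (hp : 5 ≤ p) (g h : Fin p → F) :
    coord F p 5 (br F p g h) =
      coord F p 2 g * coord F p 3 h - coord F p 3 g * coord F p 2 h := by
  rw [coord_br F p 5 (by omega) (by omega)]
  rw [show (Finset.Icc 1 5 : Finset ℕ) = {1, 2, 3, 4, 5} by decide,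
      Finset.sum_insert (by decide), Finset.sum_insert (by decide),
      Finset.sum_insert (by decide), Finset.sum_insert (by decide), Finset.sum_singleton]
  norm_num [coord_zero, aF_eval F 1 4 0 (by decide), aF_eval F 2 3 1 (by decide),
    aF_eval F 3 2 (-1) (by decide), aF_eval F 4 1 0 (by decide)]
  ring

/-- The 2-cochains `e^{1,4}` and `e^{2,5}` are 2-cocycles. -/
theorem e14_e25_are_cocycles (p : ℕ) (hp : p.Prime) (h5 : 5 ≤ p)
    (F : Type*) [Field F] [CharP F p] :
    (∀ g h f : Fin p → F, d2 F p (wedge F p 1 4) g h f = 0) ∧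
    (∀ g h f : Fin p → F, d2 F p (wedge F p 2 5) g h f = 0) := by
  constructor
  · intro g h f
    simp only [d2, wedge]
    rw [coord_br_one F p h5, coord_br_one F p h5, coord_br_one F p h5,
        coord_br_four F p h5, coord_br_four F p h5, coord_br_four F p h5]
    ring
  · intro g h f
    simp only [d2, wedge]
    rw [coord_br_two F p h5, coord_br_two F p h5, coord_br_two F p h5,
        coord_br_five F p h5, coord_br_five F p h5, coord_br_five F p h5]
    ring
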